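/- Let Σ be a real symmetric positive definite 2n×2n matrix and η > 0. The Hermitian matrix Σ + (iη/2)J is positive semidefinite if and only if η ≤ 2λ_min, where λ_min is the smallest symplectic eigenvalue of Σ (i.e., the smallest positive number λ such that ±iλ is an eigenvalue of JΣ). -/

import Mathlib

set_option maxHeartbeats 1000000


open scoped ComplexOrder

noncomputable section

/-- The standard symplectic matrix `J = [[0, Iₙ], [−Iₙ, 0]]`. -/
def Jmat (n : ℕ) : Matrix (Fin n ⊕ Fin n) (Fin n ⊕ Fin n) ℝ :=
  Matrix.fromBlocks 0 1 (-1) 0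

/-- `lam` is a symplectic eigenvalue of `S` when `i·lam` is an eigenvalue of `JS`. -/
def IsSymplecticEigenvalue {n : ℕ}
    (S : Matrix (Fin n ⊕ Fin n) (Fin n ⊕ Fin n) ℝ) (lam : ℝ) : Prop :=
  ∃ v : (Fin n ⊕ Fin n) → ℂ, v ≠ 0 ∧
    ((Jmat n).map Complex.ofReal * S.map Complex.ofReal).mulVec v
      = (Complex.I * (lam : ℂ)) • v

namespace SympAux

open Matrix

set_option linter.unusedSectionVars false

variable {m : Type*} [Fintype m] [DecidableEq m]

lemma herm_quad_real {M : Matrix m m ℂ} (hM : M.IsHermitian) (x : m → ℂ) :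
    star (star x ⬝ᵥ M *ᵥ x) = star x ⬝ᵥ M *ᵥ x := by
  have h1 : star (star x ⬝ᵥ M *ᵥ x) = star (M *ᵥ x) ⬝ᵥ x :=
    (star_dotProduct (M *ᵥ x) x).symm
  rw [h1, star_mulVec, ← dotProduct_mulVec, hM.eq]

lemma herm_quad_im_zero {M : Matrix m m ℂ} (hM : M.IsHermitian) (x : m → ℂ) :
    (star x ⬝ᵥ M *ᵥ x).im = 0 := by
  have := congrArg Complex.im (herm_quad_real hM x)
  simp only [Complex.star_def, Complex.conj_im] at this
  linarith

lemma posDef_map_complex {S : Matrix m m ℝ} (hpd : S.PosDef) :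
    (S.map Complex.ofReal).PosDef := by
  obtain ⟨B, hB⟩ : ∃ B : Matrix m m ℝ, S = Bᴴ * B := by
    open scoped MatrixOrder in
    obtain ⟨B, hB⟩ := CStarAlgebra.nonneg_iff_eq_star_mul_self.mp hpd.posSemidef.nonneg
    exact ⟨B, hB⟩
  have hmap : S.map Complex.ofReal
      = (B.map Complex.ofReal)ᴴ * (B.map Complex.ofReal) := by
    have h2 : ((Bᴴ * B).map Complex.ofReal)
        = (Bᴴ).map Complex.ofReal * B.map Complex.ofReal :=
      Matrix.map_mul (f := Complex.ofRealHom)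
    rw [hB, h2, Matrix.conjTranspose_map]
    intro r
    simp [Complex.conj_ofReal]
  have hpsd : (S.map Complex.ofReal).PosSemidef := by
    rw [hmap]; exact Matrix.posSemidef_conjTranspose_mul_self _
  have hdet : (S.map Complex.ofReal).det ≠ 0 := by
    have hd : (S.map Complex.ofReal).det = (S.det : ℂ) :=
      (RingHom.map_det Complex.ofRealHom S).symm
    rw [hd]
    exact_mod_cast hpd.det_pos.ne'
  refine Matrix.PosDef.of_dotProduct_mulVec_pos hpsd.isHermitian fun x hx => ?_
  rcases lt_or_eq_of_le (hpsd.dotProduct_mulVec_nonneg x) with h | h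
  · exact h
  · exfalso
    have hz : (S.map Complex.ofReal) *ᵥ x = 0 :=
      (hpsd.dotProduct_mulVec_zero_iff x).mp h.symm
    exact hdet (Matrix.exists_mulVec_eq_zero_iff.mp ⟨x, hx, hz⟩)

lemma posDef_coercive [Nonempty m] {A : Matrix m m ℂ} (hA : A.PosDef) :
    ∃ c : ℝ, 0 < c ∧ ∀ x : m → ℂ,
      (c : ℂ) * (star x ⬝ᵥ x) ≤ star x ⬝ᵥ A *ᵥ x := by
  set hH := hA.isHermitian with hHdef
  set c : ℝ := Finset.univ.inf' Finset.univ_nonempty hH.eigenvalues with hc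
  have hcpos : 0 < c := by
    rw [hc]
    apply (Finset.lt_inf'_iff _).mpr
    intro i _
    exact hA.eigenvalues_pos i
  refine ⟨c, hcpos, fun x => ?_⟩
  have hsub : (A - (c : ℂ) • 1).PosSemidef := by
    have hU := hH.spectral_theorem
    set U : Matrix m m ℂ := (hH.eigenvectorUnitary : Matrix m m ℂ) with hUdef
    have hUU : U * star U = 1 := Matrix.mem_unitaryGroup_iff.mp hH.eigenvectorUnitary.2
    have hsm : U * ((c:ℂ) • 1) * star U = (c:ℂ) • 1 := by
      rw [Matrix.mul_smul, Matrix.mul_one, Matrix.smul_mul, hUU]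
    have h1 : A - (c : ℂ) • 1
        = U * (Matrix.diagonal (RCLike.ofReal ∘ hH.eigenvalues) - (c:ℂ) • 1) * star U := by
      rw [Matrix.mul_sub, Matrix.sub_mul, hsm]
      rw [Unitary.conjStarAlgAut_apply] at hU
      rw [← hU]
    have hDsub : Matrix.diagonal (RCLike.ofReal ∘ hH.eigenvalues) - (c:ℂ) • (1 : Matrix m m ℂ)
        = Matrix.diagonal (fun i => ((hH.eigenvalues i - c : ℝ) : ℂ)) := by
      ext i j
      by_cases h : i = j <;>
        simp [h, Matrix.diagonal_apply, Matrix.one_apply, Complex.ofReal_sub]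
    rw [h1, hDsub]
    have hdiag : (Matrix.diagonal (fun i => ((hH.eigenvalues i - c : ℝ) : ℂ))).PosSemidef := by
      apply Matrix.PosSemidef.diagonal
      intro i
      simp only [Pi.zero_apply]
      rw [Complex.zero_le_real]
      simp only [sub_nonneg, hc]
      exact Finset.inf'_le _ (Finset.mem_univ i)
    have := hdiag.mul_mul_conjTranspose_same U
    rwa [← Matrix.star_eq_conjTranspose] at this
  have h2 := hsub.dotProduct_mulVec_nonneg x
  rw [Matrix.sub_mulVec, dotProduct_sub, Matrix.smul_mulVec, Matrix.one_mulVec,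
    dotProduct_smul, sub_nonneg, smul_eq_mul] at h2
  exact h2

lemma psd_smul_real {M : Matrix m m ℂ} (hM : M.PosSemidef) {r : ℝ} (hr : 0 ≤ r) :
    (((r : ℂ)) • M).PosSemidef := by
  refine Matrix.PosSemidef.of_dotProduct_mulVec_nonneg ?_ ?_
  · show ((r : ℂ) • M)ᴴ = (r : ℂ) • M
    rw [Matrix.conjTranspose_smul, hM.isHermitian.eq]
    congr 1
    simp [Complex.star_def, Complex.conj_ofReal]
  · intro x
    rw [Matrix.smul_mulVec, dotProduct_smul, smul_eq_mul]
    exact mul_nonneg (by rw [Complex.zero_le_real]; exact hr) (hM.dotProduct_mulVec_nonneg x)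

lemma psd_of_sq {M : Matrix m m ℂ} (hM : Mᴴ = M) (hsq : M * M = (2:ℂ) • M) :
    M.PosSemidef := by
  have h : M = ((2⁻¹ : ℝ) : ℂ) • (Mᴴ * M) := by
    rw [hM, hsq, smul_smul]
    norm_num
  rw [h]
  exact psd_smul_real (Matrix.posSemidef_conjTranspose_mul_self M) (by norm_num)

lemma IB_herm {J : Matrix m m ℂ} (hJt : Jᴴ = -J) :
    (Complex.I • J).IsHermitian := by
  show (Complex.I • J)ᴴ = Complex.I • J
  rw [Matrix.conjTranspose_smul, hJt]
  simp [Complex.star_def, Complex.conj_I]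

lemma psd_one_add_IB {J : Matrix m m ℂ} (hJt : Jᴴ = -J) (hJJ : J * J = -1) :
    ((1 : Matrix m m ℂ) + Complex.I • J).PosSemidef := by
  apply psd_of_sq
  · rw [Matrix.conjTranspose_add, Matrix.conjTranspose_one, (IB_herm hJt).eq]
  · have hBB : (Complex.I • J) * (Complex.I • J) = 1 := by
      rw [Matrix.smul_mul, Matrix.mul_smul, hJJ, smul_smul, Complex.I_mul_I]
      simp
    rw [Matrix.add_mul, Matrix.mul_add, Matrix.mul_add, hBB]
    simp only [Matrix.one_mul, Matrix.mul_one, smul_add, two_smul]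
    abel

lemma psd_one_sub_IB {J : Matrix m m ℂ} (hJt : Jᴴ = -J) (hJJ : J * J = -1) :
    ((1 : Matrix m m ℂ) - Complex.I • J).PosSemidef := by
  apply psd_of_sq
  · rw [Matrix.conjTranspose_sub, Matrix.conjTranspose_one, (IB_herm hJt).eq]
  · have hBB : (Complex.I • J) * (Complex.I • J) = 1 := by
      rw [Matrix.smul_mul, Matrix.mul_smul, hJJ, smul_smul, Complex.I_mul_I]
      simp
    rw [Matrix.sub_mul, Matrix.mul_sub, Matrix.mul_sub, hBB]
    simp only [Matrix.one_mul, Matrix.mul_one, smul_sub, two_smul]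
    abel

end SympAux

section Jlemmas

open Matrix

lemma Jc_eq (n : ℕ) : (Jmat n).map Complex.ofReal
    = Matrix.fromBlocks 0 1 (-1) 0 := by
  ext i j
  rcases i with i | i <;> rcases j with j | j <;>
    by_cases h : i = j <;>
    simp [Jmat, Matrix.map_apply, Matrix.one_apply, h]

lemma Jc_mul_Jc (n : ℕ) :
    (Jmat n).map Complex.ofReal * (Jmat n).map Complex.ofReal = -1 := by
  rw [Jc_eq, Matrix.fromBlocks_multiply]
  ext i j
  rcases i with i | i <;> rcases j with j | j <;>
    by_cases h : i = j <;>
    simp [Matrix.one_apply, h]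

lemma Jc_conjTranspose (n : ℕ) :
    ((Jmat n).map Complex.ofReal)ᴴ = -((Jmat n).map Complex.ofReal) := by
  ext i j
  rcases i with i | i <;> rcases j with j | j <;>
    by_cases h : i = j <;>
    simp [Jmat, Matrix.map_apply, Matrix.one_apply, Matrix.conjTranspose_apply, h]
  · exact fun h' => absurd h'.symm h
  · exact fun h' => absurd h'.symm h

end Jlemmas

open Matrix in
/-- For a real symmetric positive definite `2n×2n` matrix `S` and `η > 0`, the
Hermitian matrix `S + (iη/2)J` is positive semidefinite if and only if
`η ≤ 2λ_min`, `λ_min` being the smallest symplectic eigenvalue of `S`. -/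
theorem posSemidef_iff_le_two_symplectic_eigenvalue {n : ℕ}
    (S : Matrix (Fin n ⊕ Fin n) (Fin n ⊕ Fin n) ℝ)
    (hsymm : S.IsSymm) (hpd : S.PosDef)
    (η : ℝ) (hη : 0 < η)
    (lmin : ℝ) (hlpos : 0 < lmin) (hleig : IsSymplecticEigenvalue S lmin)
    (hlmin : ∀ lam : ℝ, 0 < lam → IsSymplecticEigenvalue S lam → lmin ≤ lam) :
    (S.map Complex.ofReal
        + (((η / 2 : ℝ) : ℂ) * Complex.I) • (Jmat n).map Complex.ofReal).PosSemidef
      ↔ η ≤ 2 * lmin := by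
  classical
  obtain ⟨v, hv, hveq⟩ := hleig
  set Sc := S.map Complex.ofReal with hScdef
  set Jc := (Jmat n).map Complex.ofReal with hJcdef
  set Bc := Complex.I • Jc with hBcdef
  -- basic bridging facts
  have hJJ : Jc * Jc = -1 := by rw [hJcdef]; exact Jc_mul_Jc n
  have hJt : Jcᴴ = -Jc := by rw [hJcdef]; exact Jc_conjTranspose n
  have hBH : Bc.IsHermitian := SympAux.IB_herm hJt
  have hone_add : ((1 : Matrix (Fin n ⊕ Fin n) (Fin n ⊕ Fin n) ℂ) + Bc).PosSemidef :=
    SympAux.psd_one_add_IB hJt hJJ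
  have hScPD : Sc.PosDef := SympAux.posDef_map_complex hpd
  have hScH : Sc.IsHermitian := hScPD.isHermitian
  have hvex : ∃ i, v i ≠ 0 := by
    by_contra h
    push_neg at h
    exact hv (funext fun i => by simpa using h i)
  have hne : Nonempty (Fin n ⊕ Fin n) := ⟨hvex.choose⟩
  -- the pencil
  set A : ℝ → Matrix (Fin n ⊕ Fin n) (Fin n ⊕ Fin n) ℂ := fun t => Sc + t • Bc with hAdef
  have hAt : ∀ t : ℝ, A t = Sc + t • Bc := fun t => rfl
  have hAeq : ∀ t : ℝ, Sc + (((t : ℝ) : ℂ) * Complex.I) • Jc = A t := by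
    intro t
    rw [hAt]
    congr 1
    rw [hBcdef, mul_smul]
    ext i j
    simp [Complex.real_smul]
  have hermA : ∀ t : ℝ, (A t).IsHermitian := by
    intro t
    show (A t)ᴴ = A t
    rw [hAt, Matrix.conjTranspose_add, Matrix.conjTranspose_smul, star_trivial,
      hScH.eq, hBH.eq]
  set q : ((Fin n ⊕ Fin n) → ℂ) → ℂ := fun x => star x ⬝ᵥ Sc *ᵥ x with hq
  set r : ((Fin n ⊕ Fin n) → ℂ) → ℂ := fun x => star x ⬝ᵥ Bc *ᵥ x with hr
  have quadA : ∀ (t : ℝ) (x : (Fin n ⊕ Fin n) → ℂ),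
      star x ⬝ᵥ (A t) *ᵥ x = q x + (t : ℂ) * r x := by
    intro t x
    rw [hAt, Matrix.add_mulVec, dotProduct_add, Matrix.smul_mulVec, dotProduct_smul]
    rw [hq, hr]
    simp [Complex.real_smul]
  have qim : ∀ x, (q x).im = 0 := fun x => SympAux.herm_quad_im_zero hScH x
  have rim : ∀ x, (r x).im = 0 := fun x => SympAux.herm_quad_im_zero hBH x
  have qre_nonneg : ∀ x, 0 ≤ (q x).re := fun x => (Complex.le_def.mp (hScPD.posSemidef.dotProduct_mulVec_nonneg x)).1
  have hN : ∀ x : (Fin n ⊕ Fin n) → ℂ, 0 ≤ (star x ⬝ᵥ x : ℂ).re := by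
    intro x
    have h := (Matrix.PosSemidef.one (n := Fin n ⊕ Fin n) (R := ℂ)).dotProduct_mulVec_nonneg x
    rw [Matrix.one_mulVec] at h
    exact (Complex.le_def.mp h).1
  have rlb : ∀ x : (Fin n ⊕ Fin n) → ℂ, -(star x ⬝ᵥ x : ℂ).re ≤ (r x).re := by
    intro x
    have h := hone_add.dotProduct_mulVec_nonneg x
    rw [Matrix.add_mulVec, dotProduct_add, Matrix.one_mulVec] at h
    have h1 := (Complex.le_def.mp h).1
    rw [Complex.add_re] at h1
    have hrx : r x = star x ⬝ᵥ Bc *ᵥ x := rfl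
    rw [hrx]
    simp only [Complex.zero_re] at h1
    linarith
  -- PSD criterion
  have hcrit : ∀ t : ℝ, (A t).PosSemidef ↔ ∀ x, 0 ≤ (q x).re + t * (r x).re := by
    intro t
    constructor
    · intro h x
      have h2 := h.dotProduct_mulVec_nonneg x
      rw [quadA] at h2
      have h3 := (Complex.le_def.mp h2).1
      simpa [Complex.add_re, Complex.re_ofReal_mul] using h3
    · intro h
      refine Matrix.PosSemidef.of_dotProduct_mulVec_nonneg (hermA t) fun x => ?_
      rw [quadA, Complex.le_def]
      constructor
      · simpa [Complex.add_re, Complex.re_ofReal_mul] using h x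
      · simp [Complex.add_im, Complex.mul_im, qim, rim]
  -- symplectic eigenvector relation gives the upper bound
  have hub : ∀ t : ℝ, (A t).PosSemidef → t ≤ lmin := by
    intro t ht
    have h1 : Jc *ᵥ (Sc *ᵥ v) = (Complex.I * (lmin:ℂ)) • v := by
      rw [Matrix.mulVec_mulVec]
      exact hveq
    have h2 : Jc *ᵥ (Jc *ᵥ (Sc *ᵥ v)) = (Complex.I * (lmin:ℂ)) • (Jc *ᵥ v) := by
      rw [h1, Matrix.mulVec_smul]
    have h3 : Jc *ᵥ (Jc *ᵥ (Sc *ᵥ v)) = -(Sc *ᵥ v) := by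
      rw [Matrix.mulVec_mulVec, hJJ, Matrix.neg_mulVec, Matrix.one_mulVec]
    have hIl : (Complex.I * (lmin:ℂ)) ≠ 0 :=
      mul_ne_zero Complex.I_ne_zero (by exact_mod_cast hlpos.ne')
    have h4 : (Complex.I * (lmin:ℂ)) • (Jc *ᵥ v) = -(Sc *ᵥ v) := h2.symm.trans h3
    have h6 : Jc *ᵥ v = (Complex.I * (lmin:ℂ))⁻¹ • (-(Sc *ᵥ v)) := by
      rw [← h4, smul_smul, inv_mul_cancel₀ hIl, one_smul]
    have hscal : Complex.I * (Complex.I * (lmin:ℂ))⁻¹ = ((lmin:ℂ))⁻¹ := by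
      rw [mul_inv]
      field_simp
    have h5 : Bc *ᵥ v = -((lmin:ℂ)⁻¹ • (Sc *ᵥ v)) := by
      rw [hBcdef, Matrix.smul_mulVec, h6, smul_smul, hscal, smul_neg]
    have hrv : r v = -((lmin:ℂ)⁻¹) * q v := by
      have e1 : r v = star v ⬝ᵥ Bc *ᵥ v := rfl
      have e2 : q v = star v ⬝ᵥ Sc *ᵥ v := rfl
      rw [e1, e2, h5, dotProduct_neg, dotProduct_smul, smul_eq_mul, neg_mul]
    have hqpos : 0 < (q v).re := by
      have := hScPD.dotProduct_mulVec_pos hv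
      exact (Complex.lt_def.mp this).1
    have hquad := ht.dotProduct_mulVec_nonneg v
    rw [quadA] at hquad
    have heq : q v + (t:ℂ) * r v = ((1 - t/lmin : ℝ) : ℂ) * q v := by
      rw [hrv]
      push_cast
      have : (lmin : ℂ) ≠ 0 := by exact_mod_cast hlpos.ne'
      field_simp
      ring
    rw [heq] at hquad
    have hre := (Complex.le_def.mp hquad).1
    rw [Complex.re_ofReal_mul] at hre
    simp only [Complex.zero_re] at hre
    have h7 : 0 ≤ 1 - t/lmin := (mul_nonneg_iff_of_pos_right hqpos).mp hre
    have h8 : t/lmin ≤ 1 := by linarith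
    exact (div_le_one hlpos).mp h8
  -- rewrite the goal
  rw [hAeq (η/2)]
  constructor
  · intro h
    have := hub (η/2) h
    linarith
  · intro hle
    set P : Set ℝ := {t | 0 ≤ t ∧ (A t).PosSemidef} with hPdef
    have hP0 : (0:ℝ) ∈ P := by
      refine ⟨le_refl 0, ?_⟩
      have : A 0 = Sc := by rw [hAt]; simp
      rw [this]
      exact hScPD.posSemidef
    have hPbdd : BddAbove P := ⟨lmin, fun t ht => hub t ht.2⟩
    set T := sSup P with hT
    have hT0 : 0 ≤ T := le_csSup hPbdd hP0
    have hTmem_quad : ∀ x, 0 ≤ (q x).re + T * (r x).re := by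
      intro x
      have hclosed : IsClosed {t : ℝ | 0 ≤ (q x).re + t * (r x).re} :=
        isClosed_le continuous_const (by continuity)
      have hsubP : P ⊆ {t : ℝ | 0 ≤ (q x).re + t * (r x).re} :=
        fun t ht => (hcrit t).mp ht.2 x
      exact (closure_minimal hsubP hclosed) (csSup_mem_closure ⟨0, hP0⟩ hPbdd)
    have hTP : (A T).PosSemidef := (hcrit T).mpr hTmem_quad
    by_cases hPD : (A T).PosDef
    · exfalso
      obtain ⟨c, hc, hcoer⟩ := SympAux.posDef_coercive hPD
      have hmem : T + c ∈ P := by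
        refine ⟨by linarith, (hcrit (T+c)).mpr fun x => ?_⟩
        have h1 : c * (star x ⬝ᵥ x : ℂ).re ≤ (q x).re + T * (r x).re := by
          have hco := hcoer x
          have hco1 := (Complex.le_def.mp hco).1
          rw [quadA] at hco1
          simpa [Complex.add_re, Complex.re_ofReal_mul] using hco1
        have h2 := rlb x
        have h3 := hN x
        nlinarith
      have := le_csSup hPbdd hmem
      linarith
    · -- boundary point is singular
      have hex : ∃ x, x ≠ 0 ∧ star x ⬝ᵥ (A T) *ᵥ x = 0 := by
        by_contra hcon
        push_neg at hcon
        apply hPD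
        refine Matrix.PosDef.of_dotProduct_mulVec_pos (hermA T) fun x hx0 => ?_
        rcases lt_or_eq_of_le (hTP.dotProduct_mulVec_nonneg x) with h | h
        · exact h
        · exact absurd h.symm (hcon x hx0)
      obtain ⟨x, hx0, hxq⟩ := hex
      have hker : (A T) *ᵥ x = 0 := (hTP.dotProduct_mulVec_zero_iff x).mp hxq
      have hSx : Sc *ᵥ x = -(T • (Bc *ᵥ x)) := by
        have h0 : Sc *ᵥ x + T • (Bc *ᵥ x) = 0 := by
          have := hker
          rw [hAt, Matrix.add_mulVec, Matrix.smul_mulVec] at this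
          exact this
        exact eq_neg_of_add_eq_zero_left h0
      have hTpos : 0 < T := by
        rcases hT0.lt_or_eq with h | h
        · exact h
        · exfalso
          have hz : Sc *ᵥ x = 0 := by rw [hSx, ← h]; simp
          have h0 := hScPD.dotProduct_mulVec_pos hx0
          rw [hz, dotProduct_zero] at h0
          exact lt_irrefl 0 h0
      have hsymp : IsSymplecticEigenvalue S T := by
        refine ⟨x, hx0, ?_⟩
        show (Jc * Sc) *ᵥ x = (Complex.I * (T:ℂ)) • x
        rw [← Matrix.mulVec_mulVec, hSx, hBcdef, Matrix.smul_mulVec,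
          Matrix.mulVec_neg, Matrix.mulVec_smul, Matrix.mulVec_smul,
          Matrix.mulVec_mulVec, hJJ, Matrix.neg_mulVec, Matrix.one_mulVec]
        funext i
        simp [Complex.real_smul]
        ring
      have hlT := hlmin T hTpos hsymp
      refine (hcrit (η/2)).mpr fun x' => ?_
      have hQ := qre_nonneg x'
      have hQT := hTmem_quad x'
      have h12 : η/2 ≤ T := by linarith
      have h120 : 0 ≤ η/2 := by linarith
      rcases le_or_gt 0 ((r x').re) with h | h
      · have : 0 ≤ (η/2) * (r x').re := mul_nonneg h120 h
        linarith
      · nlinarith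

end
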